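/- A virtually cyclic group is either finite, or maps onto ℤ, or maps onto the infinite dihedral group D_∞. -/

import Mathlib

open Subgroup Function

lemma aux_ic (H : Type*) [Group H] [IsCyclic H] [Infinite H] :
    Nonempty (H ≃* Multiplicative ℤ) := by
  obtain ⟨g, hg⟩ := IsCyclic.exists_generator (α := H)
  have hord : ¬ IsOfFinOrder g := by
    intro h
    have : Finite H := by
      have huniv : (zpowers g : Set H) = Set.univ := by ext x; simp [hg x]
      have hfin : (zpowers g : Set H).Finite := h.finite_zpowers
      rw [huniv] at hfin
      exact Set.finite_univ_iff.mp hfin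
    exact not_finite H
  have hinj : Function.Injective (zpowersHom H g) :=
    fun x y hxy => injective_zpow_iff_not_isOfFinOrder.mpr hord hxy
  have hsurj : Function.Surjective (zpowersHom H g) := by
    intro x
    obtain ⟨n, hn⟩ := hg x
    exact ⟨Multiplicative.ofAdd n, hn⟩
  exact ⟨(MulEquiv.ofBijective _ ⟨hinj, hsurj⟩).symm⟩

lemma aux_dich {G : Type} [Group G] (N : Subgroup G) [N.Normal] [IsCyclic N] [Infinite N]
    (g : G) : (∀ x ∈ N, g * x * g⁻¹ = x) ∨ (∀ x ∈ N, g * x * g⁻¹ = x⁻¹) := by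
  obtain ⟨a, ha⟩ := IsCyclic.exists_generator (α := N)
  have hordN : ¬ IsOfFinOrder a := by
    intro h
    have : Finite N := by
      have huniv : (zpowers a : Set N) = Set.univ := by ext x; simp [ha x]
      have hfin : (zpowers a : Set N).Finite := h.finite_zpowers
      rw [huniv] at hfin
      exact Set.finite_univ_iff.mp hfin
    exact not_finite N
  have hord : ¬ IsOfFinOrder (a : G) := by
    rw [← orderOf_eq_zero_iff] at hordN ⊢
    rwa [Subgroup.orderOf_coe]
  have hinj := injective_zpow_iff_not_isOfFinOrder.mpr hord
  have hmem : ∀ x : G, x ∈ N → ∃ m : ℤ, x = (a : G) ^ m := by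
    intro x hx
    obtain ⟨m, hm⟩ := ha ⟨x, hx⟩
    simp only at hm
    refine ⟨m, ?_⟩
    have := congrArg (Subtype.val) hm
    simpa using this.symm
  obtain ⟨m, hm⟩ := hmem (g * a * g⁻¹) (Subgroup.Normal.conj_mem ‹N.Normal› _ a.2 g)
  obtain ⟨m', hm'⟩ := hmem (g⁻¹ * a * g) (by
    have := Subgroup.Normal.conj_mem ‹N.Normal› _ a.2 g⁻¹
    simpa using this)
  have key : (a : G) ^ (m * m') = (a : G) ^ (1 : ℤ) := by
    calc (a : G) ^ (m * m') = ((a : G) ^ m') ^ m := by rw [← zpow_mul, mul_comm]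
    _ = (g⁻¹ * a * g) ^ m := by rw [hm']
    _ = g⁻¹ * (a : G) ^ m * g := by
        have := conj_zpow (i := m) (a := g⁻¹) (b := (a : G))
        simpa using this
    _ = g⁻¹ * (g * a * g⁻¹) * g := by rw [hm]
    _ = (a : G) ^ (1 : ℤ) := by group
  have hmm : m * m' = 1 := hinj key
  have : m = 1 ∨ m = -1 := by
    rcases Int.isUnit_iff.mp (IsUnit.of_mul_eq_one m' hmm) with h | h <;> [left; right] <;> exact h
  rcases this with h1 | h1
  · left
    intro x hx
    obtain ⟨j, hj⟩ := hmem x hx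
    subst hj
    have : g * (a:G) ^ j * g⁻¹ = ((a:G) ^ m) ^ j := by
      rw [← hm, ← conj_zpow]
    rw [this, h1]; simp
  · right
    intro x hx
    obtain ⟨j, hj⟩ := hmem x hx
    subst hj
    have : g * (a:G) ^ j * g⁻¹ = ((a:G) ^ m) ^ j := by
      rw [← hm, ← conj_zpow]
    rw [this, h1]
    simp [← zpow_mul, mul_comm]

lemma aux_surjhom {K : Type*} [Group K] (F : K →* Multiplicative ℤ) (k₀ : K)
    (hk₀ : F k₀ ≠ 1) :
    ∃ E : K →* Multiplicative ℤ, Surjective E ∧ ∀ k k', F k = (F k')⁻¹ → E k = (E k')⁻¹ := by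
  have hinf : Infinite F.range := by
    have hmem : ∀ n : ℤ, F k₀ ^ n ∈ F.range := fun n =>
      zpow_mem (MonoidHom.mem_range.mpr ⟨k₀, rfl⟩) n
    refine Infinite.of_injective (fun n : ℤ => (⟨F k₀ ^ n, hmem n⟩ : F.range)) ?_
    intro x y hxy
    have h1 : (F k₀) ^ x = (F k₀) ^ y := congrArg Subtype.val hxy
    have h2 : Multiplicative.toAdd (F k₀ ^ x) = Multiplicative.toAdd (F k₀ ^ y) := congrArg _ h1
    rw [Int.toAdd_zpow, Int.toAdd_zpow] at h2
    have h3 : Multiplicative.toAdd (F k₀) ≠ 0 := by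
      intro h; exact hk₀ (by simpa using h)
    exact mul_left_cancel₀ h3 h2
  obtain ⟨θ⟩ := aux_ic F.range
  refine ⟨θ.toMonoidHom.comp F.rangeRestrict, ?_, ?_⟩
  · exact θ.surjective.comp F.rangeRestrict_surjective
  · intro k k' h
    have : F.rangeRestrict k = (F.rangeRestrict k')⁻¹ := by
      apply Subtype.ext; simpa using h
    simp [this]

/-- A virtually cyclic group is either finite, or maps onto `ℤ`, or maps onto the
infinite dihedral group `D_∞` (realized as `DihedralGroup 0`). -/
theorem stmt2 (G : Type) [Group G]
    (hvc : ∃ C : Subgroup G, IsCyclic C ∧ C.index ≠ 0) :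
    Finite G ∨ (∃ f : G →* Multiplicative ℤ, Function.Surjective f) ∨
      (∃ f : G →* DihedralGroup 0, Function.Surjective f) := by
  rcases finite_or_infinite G with hfin | hinf
  · exact Or.inl hfin
  right
  obtain ⟨C, hCcyc, hCi⟩ := hvc
  haveI : C.FiniteIndex := ⟨hCi⟩
  set N : Subgroup G := C.normalCore with hNdef
  haveI hNnorm : N.Normal := C.normalCore_normal
  haveI hNfi : N.FiniteIndex := C.finiteIndex_normalCore
  haveI hNcyc : IsCyclic N := Subgroup.isCyclic_of_le C.normalCore_le
  haveI hNinf : Infinite N := by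
    rw [← not_finite_iff_infinite]
    intro h
    have hcard : Nat.card N * N.index = Nat.card G := Subgroup.card_mul_index N
    have h1 : Nat.card N ≠ 0 := Nat.card_ne_zero.mpr ⟨⟨1⟩, h⟩
    have h2 : N.index ≠ 0 := hNfi.index_ne_zero
    have : Nat.card G ≠ 0 := hcard ▸ Nat.mul_ne_zero h1 h2
    exact (not_finite_iff_infinite.mpr hinf) (Nat.finite_of_card_ne_zero this)
  letI : CommGroup N := IsCyclic.commGroup
  set K : Subgroup G := Subgroup.centralizer (N : Set G) with hKdef
  have hNK : N ≤ K := by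
    intro n hn
    rw [Subgroup.mem_centralizer_iff]
    intro m hm
    have : (⟨m, hm⟩ : N) * ⟨n, hn⟩ = ⟨n, hn⟩ * ⟨m, hm⟩ := mul_comm _ _
    exact congrArg Subtype.val this
  have hKmem : ∀ g : G, g ∈ K ↔ ∀ x ∈ N, g * x * g⁻¹ = x := by
    intro g
    rw [Subgroup.mem_centralizer_iff]
    constructor
    · intro h x hx
      rw [← h x hx]
      group
    · intro h x hx
      have := h x hx
      calc x * g = (g * x * g⁻¹) * g := by rw [this]
      _ = g * x := by group
  have hdich : ∀ g : G, g ∉ K → ∀ x ∈ N, g * x * g⁻¹ = x⁻¹ := by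
    intro g hg
    rcases aux_dich N g with h | h
    · exact absurd ((hKmem g).mpr h) hg
    · exact h
  obtain ⟨ι⟩ := aux_ic N
  haveI : (N.subgroupOf K).FiniteIndex := Subgroup.instFiniteIndex_subgroupOf N K
  set eNN : N.subgroupOf K ≃* N := Subgroup.subgroupOfEquivOfLe hNK with heNN
  set φ : N.subgroupOf K →* Multiplicative ℤ := ι.toMonoidHom.comp eNN.toMonoidHom with hφ
  set ψ : K →* Multiplicative ℤ := MonoidHom.transfer φ with hψ
  set d : ℕ := (N.subgroupOf K).index with hd
  have hdne : d ≠ 0 := Subgroup.FiniteIndex.index_ne_zero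
  set aN : N := ι.symm (Multiplicative.ofAdd 1) with haNdef
  set a : G := (aN : G) with hadef
  have haN : a ∈ N := aN.2
  set ka : K := ⟨a, hNK haN⟩ with hka
  -- every element of K commutes with every element of N
  have hcomm : ∀ (x : G), x ∈ N → ∀ g₀ : K, x * g₀ = (g₀ : G) * x := by
    intro x hx g₀
    exact Subgroup.mem_centralizer_iff.mp g₀.2 x hx
  have hψka : ψ ka = Multiplicative.ofAdd (d : ℤ) := by
    have key : ∀ (k : ℕ) (g₀ : K), g₀⁻¹ * ka ^ k * g₀ ∈ N.subgroupOf K →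
        g₀⁻¹ * ka ^ k * g₀ = ka ^ k := by
      intro k g₀ _
      apply Subtype.ext
      push_cast
      have h1 : a ^ k * (g₀ : G) = (g₀ : G) * a ^ k := hcomm _ (pow_mem haN k) g₀
      calc (g₀ : G)⁻¹ * a ^ k * g₀ = (g₀ : G)⁻¹ * (a ^ k * g₀) := by group
      _ = (g₀ : G)⁻¹ * ((g₀ : G) * a ^ k) := by rw [h1]
      _ = a ^ k := by group
    rw [hψ, MonoidHom.transfer_eq_pow φ ka key]
    have h2 : eNN ⟨ka ^ d, MonoidHom.transfer_eq_pow_aux ka key⟩ = aN ^ d := by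
      apply Subtype.ext
      push_cast
      rfl
    rw [hφ]
    simp only [MonoidHom.comp_apply, MulEquiv.coe_toMonoidHom]
    rw [h2, map_pow]
    have h3 : ι aN = Multiplicative.ofAdd 1 := ι.apply_symm_apply _
    rw [h3]
    rw [← ofAdd_nsmul]
    norm_num
  have hψkane : ψ ka ≠ 1 := by
    rw [hψka]
    simpa using fun h => hdne (by exact_mod_cast h)
  by_cases hKall : ∀ g : G, g ∈ K
  · left
    set j : G →* K := (MonoidHom.id G).codRestrict K hKall with hj
    have hjka : ψ.comp j a = ψ ka := by
      have : j a = ka := Subtype.ext rfl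
      rw [MonoidHom.comp_apply, this]
    obtain ⟨E, hEsurj, -⟩ := aux_surjhom (ψ.comp j) a (by rw [hjka]; exact hψkane)
    exact ⟨E, hEsurj⟩
  · right
    push_neg at hKall
    obtain ⟨t, ht⟩ := hKall
    have hinvt : ∀ x ∈ N, t * x * t⁻¹ = x⁻¹ := hdich t ht
    have hinvt' : ∀ x ∈ N, t⁻¹ * x * t = x⁻¹ := by
      intro x hx
      have hy : t⁻¹ * x * t ∈ N := by
        have := hNnorm.conj_mem x hx t⁻¹
        simpa using this
      have h1 : t * (t⁻¹ * x * t) * t⁻¹ = (t⁻¹ * x * t)⁻¹ := hinvt _ hy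
      have h2 : t * (t⁻¹ * x * t) * t⁻¹ = x := by group
      rw [h2] at h1
      have := congrArg Inv.inv h1
      simpa using this.symm
    -- basic membership facts
    have hKmul : ∀ g₁ g₂ : G, g₁ ∉ K → g₂ ∉ K → g₁ * g₂ ∈ K := by
      intro g₁ g₂ h₁ h₂
      rw [hKmem]
      intro x hx
      have hx2 : g₂ * x * g₂⁻¹ ∈ N := by
        rw [hdich g₂ h₂ x hx]
        exact inv_mem hx
      calc g₁ * g₂ * x * (g₁ * g₂)⁻¹ = g₁ * (g₂ * x * g₂⁻¹) * g₁⁻¹ := by group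
      _ = (g₂ * x * g₂⁻¹)⁻¹ := hdich g₁ h₁ _ hx2
      _ = (x⁻¹)⁻¹ := by rw [hdich g₂ h₂ x hx]
      _ = x := inv_inv x
    have hconjmem : ∀ x : G, x ∈ K → t * x * t⁻¹ ∈ K := by
      intro x hxK
      rw [hKmem]
      intro y hy
      have hy' : t⁻¹ * y * t ∈ N := by
        have := hNnorm.conj_mem y hy t⁻¹
        simpa using this
      have h1 : x * (t⁻¹ * y * t) * x⁻¹ = t⁻¹ * y * t := (hKmem x).mp hxK _ hy'
      calc (t * x * t⁻¹) * y * (t * x * t⁻¹)⁻¹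
          = t * (x * (t⁻¹ * y * t) * x⁻¹) * t⁻¹ := by group
      _ = t * (t⁻¹ * y * t) * t⁻¹ := by rw [h1]
      _ = y := by group
    have hconjmem' : ∀ x : G, x ∈ K → t⁻¹ * x * t ∈ K := by
      intro x hxK
      rw [hKmem]
      intro y hy
      have hy' : t * y * t⁻¹ ∈ N := hNnorm.conj_mem y hy t
      have h1 : x * (t * y * t⁻¹) * x⁻¹ = t * y * t⁻¹ := (hKmem x).mp hxK _ hy'
      calc (t⁻¹ * x * t) * y * (t⁻¹ * x * t)⁻¹
          = t⁻¹ * (x * (t * y * t⁻¹) * x⁻¹) * t := by group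
      _ = t⁻¹ * (t * y * t⁻¹) * t := by rw [h1]
      _ = y := by group
    have hmemK : ∀ g : G, g ∉ K → t⁻¹ * g ∈ K := by
      intro g hg
      have htinv : t⁻¹ ∉ K := fun h => ht (by simpa using inv_mem h)
      exact hKmul t⁻¹ g htinv hg
    have ht2 : t * t ∈ K := hKmul t t ht ht
    set kt2 : K := ⟨t * t, ht2⟩ with hkt2
    -- conjugation by t as a hom K →* K
    set c : K →* K := {
      toFun := fun k => ⟨t * k * t⁻¹, hconjmem k k.2⟩
      map_one' := by apply Subtype.ext; simp
      map_mul' := by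
        intro k₁ k₂
        apply Subtype.ext
        push_cast
        group } with hc
    have hcapp : ∀ (x : G) (hx : x ∈ K), c ⟨x, hx⟩ = ⟨t * x * t⁻¹, hconjmem x hx⟩ := by
      intro x hx; rfl
    set F : K →* Multiplicative ℤ := ψ / ψ.comp c with hF
    have hFapp : ∀ k : K, F k = ψ k / ψ (c k) := fun k => rfl
    have hcc : ∀ k : K, c (c k) = kt2 * k * kt2⁻¹ := by
      intro k
      apply Subtype.ext
      simp only [hc, MonoidHom.coe_mk, OneHom.coe_mk, hkt2]
      push_cast
      group
    have hψconj : ∀ u k : K, ψ (u * k * u⁻¹) = ψ k := by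
      intro u k
      rw [map_mul, map_mul, map_inv]
      rw [mul_comm]
      group
    have hFanti : ∀ k : K, F (c k) = (F k)⁻¹ := by
      intro k
      rw [hFapp, hFapp, hcc, hψconj, inv_div]
    have hcka : c ka = ka⁻¹ := by
      apply Subtype.ext
      simp only [hc, MonoidHom.coe_mk, OneHom.coe_mk, hka]
      push_cast
      exact hinvt a haN
    have hFkane : F ka ≠ 1 := by
      rw [hFapp, hcka, map_inv, hψka]
      intro h
      rw [div_eq_mul_inv, inv_inv, ← ofAdd_add] at h
      have h2 := congrArg Multiplicative.toAdd h
      simp at h2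
      omega
    obtain ⟨E, hEsurj, hEanti0⟩ := aux_surjhom F ka hFkane
    have hEanti : ∀ k : K, E (c k) = (E k)⁻¹ := fun k => hEanti0 _ _ (hFanti k)
    -- A : the integer value
    have hEconj : ∀ (x : G) (hx : x ∈ K) (hx' : t * x * t⁻¹ ∈ K),
        E ⟨t * x * t⁻¹, hx'⟩ = (E ⟨x, hx⟩)⁻¹ := by
      intro x hx hx'
      have : (⟨t * x * t⁻¹, hx'⟩ : K) = c ⟨x, hx⟩ := Subtype.ext rfl
      rw [this, hEanti]
    have hEconj' : ∀ (x : G) (hx : x ∈ K) (hx' : t⁻¹ * x * t ∈ K),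
        E ⟨t⁻¹ * x * t, hx'⟩ = (E ⟨x, hx⟩)⁻¹ := by
      intro x hx hx'
      have h1 : t * (t⁻¹ * x * t) * t⁻¹ ∈ K := by
        have : t * (t⁻¹ * x * t) * t⁻¹ = x := by group
        rw [this]; exact hx
      have h2 := hEconj (t⁻¹ * x * t) hx' h1
      have h3 : (⟨t * (t⁻¹ * x * t) * t⁻¹, h1⟩ : K) = ⟨x, hx⟩ := by
        apply Subtype.ext; group
      rw [h3] at h2
      rw [h2, inv_inv]
    have hEt2 : E kt2 = 1 := by
      have h1 : t * (t * t) * t⁻¹ ∈ K := hconjmem _ ht2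
      have h2 := hEconj (t * t) ht2 h1
      have h3 : (⟨t * (t * t) * t⁻¹, h1⟩ : K) = kt2 := by
        apply Subtype.ext; simp only [hkt2]; group
      rw [h3] at h2
      have h4 := congrArg Multiplicative.toAdd h2
      simp only [toAdd_inv] at h4
      have h5 : Multiplicative.toAdd (E kt2) = 0 := by
        have heq : (⟨t * t, ht2⟩ : K) = kt2 := rfl
        rw [heq] at h4
        omega
      have := congrArg Multiplicative.ofAdd h5
      simpa using this
    classical
    set A : (g : G) → g ∈ K → ℤ := fun g h => Multiplicative.toAdd (E ⟨g, h⟩) with hA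
    have hAcongr : ∀ (x y : G) (hx : x ∈ K) (hy : y ∈ K), x = y → A x hx = A y hy := by
      intro x y hx hy hxy
      subst hxy; rfl
    have hAadd : ∀ (x y : G) (hx : x ∈ K) (hy : y ∈ K) (hxy : x * y ∈ K),
        A (x * y) hxy = A x hx + A y hy := by
      intro x y hx hy hxy
      have : (⟨x * y, hxy⟩ : K) = ⟨x, hx⟩ * ⟨y, hy⟩ := Subtype.ext rfl
      rw [hA]
      simp only [this, map_mul]
      rfl
    have hAconj : ∀ (x : G) (hx : x ∈ K) (hx' : t * x * t⁻¹ ∈ K),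
        A (t * x * t⁻¹) hx' = - A x hx := by
      intro x hx hx'
      rw [hA]; simp only [hEconj x hx hx']; rfl
    have hAconj' : ∀ (x : G) (hx : x ∈ K) (hx' : t⁻¹ * x * t ∈ K),
        A (t⁻¹ * x * t) hx' = - A x hx := by
      intro x hx hx'
      rw [hA]; simp only [hEconj' x hx hx']; rfl
    have hAt2 : A (t * t) ht2 = 0 := by
      show Multiplicative.toAdd (E ⟨t * t, ht2⟩) = 0
      rw [show (⟨t * t, ht2⟩ : K) = kt2 from rfl, hEt2]
      rfl
    have hmul10 : ∀ g₁ g₂ : G, g₁ ∈ K → g₂ ∉ K → g₁ * g₂ ∉ K := by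
      intro g₁ g₂ h₁ h₂ h
      exact h₂ (by simpa using mul_mem (inv_mem h₁) h)
    have hmul01 : ∀ g₁ g₂ : G, g₁ ∉ K → g₂ ∈ K → g₁ * g₂ ∉ K := by
      intro g₁ g₂ h₁ h₂ h
      exact h₁ (by simpa using mul_mem h (inv_mem h₂))
    set f : G → DihedralGroup 0 := fun g =>
      if h : g ∈ K then DihedralGroup.r (A g h)
      else DihedralGroup.sr (A (t⁻¹ * g) (hmemK g h)) with hfdef
    have hfmul : ∀ g₁ g₂ : G, f (g₁ * g₂) = f g₁ * f g₂ := by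
      intro g₁ g₂
      by_cases h₁ : g₁ ∈ K <;> by_cases h₂ : g₂ ∈ K
      · have h12 : g₁ * g₂ ∈ K := mul_mem h₁ h₂
        simp only [hfdef, dif_pos h₁, dif_pos h₂, dif_pos h12, DihedralGroup.r_mul_r]
        congr 1
        exact hAadd g₁ g₂ h₁ h₂ h12
      · have h12 := hmul10 g₁ g₂ h₁ h₂
        simp only [hfdef, dif_pos h₁, dif_neg h₂, dif_neg h12, DihedralGroup.r_mul_sr]
        congr 1
        have e1 : t⁻¹ * (g₁ * g₂) = (t⁻¹ * g₁ * t) * (t⁻¹ * g₂) := by group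
        have m1 : t⁻¹ * g₁ * t ∈ K := hconjmem' g₁ h₁
        have m2 : t⁻¹ * g₂ ∈ K := hmemK g₂ h₂
        have m3 : (t⁻¹ * g₁ * t) * (t⁻¹ * g₂) ∈ K := mul_mem m1 m2
        rw [hAcongr _ _ _ m3 e1, hAadd _ _ m1 m2 m3, hAconj' g₁ h₁ m1]
        exact neg_add_eq_sub _ _
      · have h12 := hmul01 g₁ g₂ h₁ h₂
        simp only [hfdef, dif_neg h₁, dif_pos h₂, dif_neg h12, DihedralGroup.sr_mul_r]
        congr 1
        have e1 : t⁻¹ * (g₁ * g₂) = (t⁻¹ * g₁) * g₂ := by group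
        have m1 := hmemK g₁ h₁
        have m3 : (t⁻¹ * g₁) * g₂ ∈ K := mul_mem m1 h₂
        rw [hAcongr _ _ _ m3 e1, hAadd _ _ m1 h₂ m3]
        rfl
      · have h12 : g₁ * g₂ ∈ K := hKmul g₁ g₂ h₁ h₂
        simp only [hfdef, dif_neg h₁, dif_neg h₂, dif_pos h12, DihedralGroup.sr_mul_sr]
        congr 1
        have m1 := hmemK g₁ h₁
        have m2 := hmemK g₂ h₂
        have mA : t * (t⁻¹ * g₁) * t⁻¹ ∈ K := hconjmem _ m1
        have mB : (t * t) * (t⁻¹ * g₂) ∈ K := mul_mem ht2 m2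
        have e1 : g₁ * g₂ = (t * (t⁻¹ * g₁) * t⁻¹) * ((t * t) * (t⁻¹ * g₂)) := by group
        have m3 : (t * (t⁻¹ * g₁) * t⁻¹) * ((t * t) * (t⁻¹ * g₂)) ∈ K := mul_mem mA mB
        rw [hAcongr _ _ h12 m3 e1, hAadd _ _ mA mB m3, hAadd _ _ ht2 m2 mB,
            hAconj _ m1 mA, hAt2]
        exact (zero_add (A _ m2)).symm ▸ neg_add_eq_sub (A _ m1) (A _ m2)
    refine ⟨MonoidHom.mk' f hfmul, ?_⟩
    intro x
    cases x with
    | r i =>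
      obtain ⟨k, hk⟩ := hEsurj (Multiplicative.ofAdd i)
      refine ⟨(k : G), ?_⟩
      show f (k : G) = _
      rw [hfdef]
      simp only [dif_pos k.2]
      congr 1
    | sr i =>
      obtain ⟨k, hk⟩ := hEsurj (Multiplicative.ofAdd i)
      have hnot : t * (k : G) ∉ K := hmul01 t k ht k.2
      refine ⟨t * (k : G), ?_⟩
      show f (t * (k : G)) = _
      rw [hfdef]
      simp only [dif_neg hnot]
      congr 1
      have e1 : t⁻¹ * (t * (k : G)) = (k : G) := by group
      rw [hAcongr _ _ (hmemK _ hnot) k.2 e1]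
      show Multiplicative.toAdd (E ⟨(k : G), k.2⟩) = i
      rw [show (⟨(k : G), k.2⟩ : K) = k from rfl, hk]
      rfl
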